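/- arXiv:1308.5585 — 3 statements merged into one kernel-verified Lean document; each statement's English description precedes it below -/
import Mathlib

section
/- For tree patterns interpreted over labeled trees, the existence of a containment mapping from p into q implies semantic containment q ⊑ p: every match of q in any tree yields a match of p with the same output node. -/
/-- A tree pattern: nodes labeled in `σ`, child (/) and descendant (//) edges,
a distinguished root and output node. -/
structure TreePattern (σ : Type) where
  Node : Type
  root : Node
  out : Node
  label : Node → σ
  child : Node → Node → Prop
  desc : Node → Node → Prop

/-- An edge of either kind. -/
def TreePattern.edge {σ : Type} (p : TreePattern σ) (a b : p.Node) : Prop :=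
  p.child a b ∨ p.desc a b

/-- A path of length ≥ 1 inside a pattern. -/
def TreePattern.reach {σ : Type} (p : TreePattern σ) : p.Node → p.Node → Prop :=
  Relation.TransGen p.edge

/-- A containment mapping from pattern `p` into pattern `q`. -/
structure IsContainmentMapping {σ : Type} (p q : TreePattern σ)
    (h : p.Node → q.Node) : Prop where
  root : h p.root = q.root
  out : h p.out = q.out
  label : ∀ x, q.label (h x) = p.label x
  child : ∀ a b, p.child a b → q.child (h a) (h b)
  desc : ∀ a b, p.desc a b → q.reach (h a) (h b)

/-- A labeled tree. -/
structure LTree (σ : Type) where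
  Node : Type
  root : Node
  label : Node → σ
  child : Node → Node → Prop

/-- Proper ancestor-descendant relation in a tree. -/
def LTree.desc {σ : Type} (t : LTree σ) : t.Node → t.Node → Prop :=
  Relation.TransGen t.child

/-- An embedding of a tree pattern into a labeled tree. -/
structure IsEmbedding {σ : Type} (p : TreePattern σ) (t : LTree σ)
    (e : p.Node → t.Node) : Prop where
  root : e p.root = t.root
  label : ∀ x, t.label (e x) = p.label x
  child : ∀ a b, p.child a b → t.child (e a) (e b)
  desc : ∀ a b, p.desc a b → t.desc (e a) (e b)

/-- The answers of pattern `p` on tree `t`: images of the output node under embeddings. -/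
def answers {σ : Type} (p : TreePattern σ) (t : LTree σ) : Set t.Node :=
  {x | ∃ e, IsEmbedding p t e ∧ e p.out = x}

/-- Semantic containment `q ⊑ p`: every answer of `q` is an answer of `p`, on all trees. -/
def contained {σ : Type} (q p : TreePattern σ) : Prop :=
  ∀ t : LTree σ, answers q t ⊆ answers p t

/-- If there is a containment mapping from pattern `p` into pattern `q`, then
`q ⊑ p` semantically: every answer of `q` on any tree is an answer of `p`. -/
theorem containmentMapping_implies_contained {σ : Type} (p q : TreePattern σ)
    (h : p.Node → q.Node) (hcm : IsContainmentMapping p q h) :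
    contained q p := by
  intro t x hx
  obtain ⟨e, he, hout⟩ := hx
  have hreach : ∀ a b : q.Node, q.reach a b → t.desc (e a) (e b) := by
    intro a b hr
    induction hr with
    | single hab =>
        cases hab with
        | inl hc => exact Relation.TransGen.single (he.child _ _ hc)
        | inr hd => exact he.desc _ _ hd
    | tail _ hab ih =>
        cases hab with
        | inl hc => exact Relation.TransGen.tail ih (he.child _ _ hc)
        | inr hd => exact Relation.TransGen.trans ih (he.desc _ _ hd)
  refine ⟨e ∘ h, ⟨?_, ?_, ?_, ?_⟩, ?_⟩
  · simp [Function.comp, hcm.root, he.root]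
  · intro y; simp [Function.comp, he.label, hcm.label]
  · intro a b hab; exact he.child _ _ (hcm.child _ _ hab)
  · intro a b hab; exact hreach _ _ (hcm.desc _ _ hab)
  · simp [Function.comp, hcm.out, hout]
end

section
/- Compensation preserves containment: if tree pattern r satisfies q ⊑ r (there is a containment mapping from r into q mapping output to a node n of q), then appending to r's output node a copy of the subtree of q rooted below n yields a pattern r' with q ⊑ r' where the containment mapping sends r''s output to q's output. -/
/-- A root-mapping from `r` into `q` that is a containment mapping except that
the output of `r` is sent to the node `n` of `q` (witnessing `q ⊑ r` at `n`). -/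
structure IsMappingTo {σ : Type} (r q : TreePattern σ) (h : r.Node → q.Node)
    (n : q.Node) : Prop where
  root : h r.root = q.root
  out : h r.out = n
  label : ∀ x, q.label (h x) = r.label x
  child : ∀ a b, r.child a b → q.child (h a) (h b)
  desc : ∀ a b, r.desc a b → q.reach (h a) (h b)

/-- The pattern `r'` obtained from `r` by grafting at its output node a fresh
copy of the subtree of `q` strictly below `n` (with the same edge types), moving
the output designation to the copy of `q`'s output node. -/
def compensate {σ : Type} (r q : TreePattern σ) (n : q.Node)
    (ho : q.reach n q.out) : TreePattern σ where
  Node := r.Node ⊕ {x : q.Node // q.reach n x}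
  root := Sum.inl r.root
  out := Sum.inr ⟨q.out, ho⟩
  label := fun x => match x with
    | .inl a => r.label a
    | .inr a => q.label a.1
  child := fun x y => match x, y with
    | .inl a, .inl b => r.child a b
    | .inl a, .inr b => a = r.out ∧ q.child n b.1
    | .inr a, .inr b => q.child a.1 b.1
    | .inr _, .inl _ => False
  desc := fun x y => match x, y with
    | .inl a, .inl b => r.desc a b
    | .inl a, .inr b => a = r.out ∧ q.desc n b.1
    | .inr a, .inr b => q.desc a.1 b.1
    | .inr _, .inl _ => False

/-- Compensation preserves containment: if there is a containment mapping from
`r` into `q` sending the output of `r` to a node `n` of `q` (with `q`'s output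
below `n`), then grafting the subtree of `q` below `n` onto `r`'s output yields a
pattern `r'` with a containment mapping from `r'` into `q` sending output to
output (hence `q ⊑ r'`). -/
theorem compensate_contained {σ : Type} (r q : TreePattern σ)
    (h : r.Node → q.Node) (n : q.Node) (hm : IsMappingTo r q h n)
    (ho : q.reach n q.out) :
    ∃ h' : (compensate r q n ho).Node → q.Node,
      IsContainmentMapping (compensate r q n ho) q h' := by

  refine ⟨Sum.elim h Subtype.val, ?_, ?_, ?_, ?_, ?_⟩
  · exact hm.root
  · rfl
  · rintro (x | x)
    · exact hm.label x
    · rfl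
  · rintro (a | a) (b | b) hc
    · exact hm.child a b hc
    · obtain ⟨rfl, hc⟩ := hc
      rw [Sum.elim_inl, hm.out]
      exact hc
    · exact hc.elim
    · exact hc
  · rintro (a | a) (b | b) hd
    · exact hm.desc a b hd
    · obtain ⟨rfl, hd⟩ := hd
      rw [Sum.elim_inl, hm.out]
      exact Relation.TransGen.single (Or.inr hd)
    · exact hd.elim
    · exact Relation.TransGen.single (Or.inr hd)
end

section
/- If a tree pattern q is contained in an intersection p₁ ∩ ⋯ ∩ p_k of tree patterns (q ⊑ p_i for all i), then the identity on q together with the containment mappings from each p_i into q witnesses q ⊑ d where d is the DAG pattern formed by merging the roots and the output nodes of the p_i; conversely d ⊑ p_i for each i. -/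
/-- Answers of the DAG pattern obtained by merging the roots and the output
nodes of the patterns `p i`: an embedding of the merged DAG is exactly a family
of embeddings of the `p i` agreeing on the (merged) output node. -/
def mergedAnswers {σ : Type} {k : ℕ} (p : Fin k → TreePattern σ)
    (t : LTree σ) : Set t.Node :=
  {x | ∃ e : (i : Fin k) → (p i).Node → t.Node,
        ∀ i, IsEmbedding (p i) t (e i) ∧ e i (p i).out = x}

/-- If `q` is contained in every `p i` via containment mappings, then `q ⊑ d`
where `d` is the DAG pattern merging roots and outputs of the `p i`; and
conversely the answers of `d` are exactly the intersection of the answers of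
the `p i` on every tree (so `d ⊑ p i` for each `i`). -/
theorem merged_dag_intersection {σ : Type} {k : ℕ}
    (p : Fin k → TreePattern σ) (q : TreePattern σ)
    (hcm : ∀ i, ∃ h : (p i).Node → q.Node, IsContainmentMapping (p i) q h) :
    (∀ t : LTree σ, answers q t ⊆ mergedAnswers p t) ∧
    (∀ t : LTree σ, mergedAnswers p t = ⋂ i, answers (p i) t) := by
  have comp : ∀ (r : TreePattern σ) (h : r.Node → q.Node)
      (hc : IsContainmentMapping r q h) (t : LTree σ) (e : q.Node → t.Node)
      (he : IsEmbedding q t e), IsEmbedding r t (e ∘ h) := by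
    intro r h hc t e he
    have reach_desc : ∀ a b, q.reach a b → t.desc (e a) (e b) := by
      intro a b hr
      induction hr with
      | single hab =>
        rcases hab with hc' | hd'
        · exact Relation.TransGen.single (he.child _ _ hc')
        · exact he.desc _ _ hd'
      | tail _ hab ih =>
        rcases hab with hc' | hd'
        · exact ih.tail (he.child _ _ hc')
        · exact ih.trans (he.desc _ _ hd')
    exact {
      root := by simp [Function.comp, hc.root, he.root]
      label := fun x => by simp [Function.comp, he.label, hc.label]
      child := fun a b hab => he.child _ _ (hc.child a b hab)
      desc := fun a b hab => reach_desc _ _ (hc.desc a b hab) }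
  constructor
  · rintro t x ⟨e, he, hout⟩
    choose h hc using hcm
    refine ⟨fun i => e ∘ (h i), fun i => ⟨comp _ _ (hc i) t e he, ?_⟩⟩
    simp [Function.comp, (hc i).out, hout]
  · intro t
    ext x
    simp only [mergedAnswers, Set.mem_setOf_eq, Set.mem_iInter]
    constructor
    · rintro ⟨e, he⟩ i
      exact ⟨e i, (he i).1, (he i).2⟩
    · intro hi
      choose e he hout using hi
      exact ⟨e, fun i => ⟨he i, hout i⟩⟩
end
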